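/- Let ω be a non-constant analytic function on the open unit disk D with ω(0)=0. If for some 0<r<1 the maximum of |ω(z)| on the circle |z|=r is attained at a point z₀ with |z₀|=r, then z₀·ω'(z₀) = k·ω(z₀) for some real k ≥ 1. -/

import Mathlib

open Complex Metric

private lemma jack_aux1 (a b : ℂ) (h : (inner ℝ a (b * Complex.I) : ℝ) + inner ℝ (b * Complex.I) a = 0) :
    ((starRingEnd ℂ) a * b).im = 0 := by
  simp only [Complex.inner, Complex.mul_re, Complex.mul_im, Complex.conj_re, Complex.conj_im,
    Complex.I_re, Complex.I_im] at h ⊢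
  ring_nf at h ⊢
  linarith

private lemma jack_aux2 (a b : ℂ) : (inner ℝ a b : ℝ) + inner ℝ b a = 2 * ((starRingEnd ℂ) a * b).re := by
  simp only [Complex.inner, Complex.mul_re, Complex.conj_re, Complex.conj_im]
  ring

/-- Jack's lemma. -/
theorem jack_lemma (ω : ℂ → ℂ) (hω : AnalyticOn ℂ ω (ball (0:ℂ) 1))
    (hnc : ¬ ∃ c : ℂ, Set.EqOn ω (fun _ => c) (ball (0:ℂ) 1))
    (h0 : ω 0 = 0) (r : ℝ) (hr : 0 < r) (hr1 : r < 1)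
    (z₀ : ℂ) (hz₀ : ‖z₀‖ = r)
    (hmax : ∀ z : ℂ, ‖z‖ ≤ r → ‖ω z‖ ≤ ‖ω z₀‖) :
    ∃ k : ℝ, 1 ≤ k ∧ z₀ * deriv ω z₀ = (k : ℂ) * ω z₀ := by
  have hz₀1 : z₀ ∈ ball (0:ℂ) 1 := by
    rw [mem_ball_zero_iff]; show ‖z₀‖ < 1; rw [hz₀]; exact hr1
  have hωN : AnalyticOnNhd ℂ ω (ball (0:ℂ) 1) := isOpen_ball.analyticOn_iff_analyticOnNhd.mp hω
  have hd1 : DifferentiableOn ℂ ω (ball (0:ℂ) 1) :=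
    fun z hz => (hωN z hz).differentiableWithinAt
  have hballs : ball (0:ℂ) r ⊆ ball (0:ℂ) 1 := ball_subset_ball hr1.le
  -- ω is not constant on the small ball either
  have hcon : ∀ c : ℂ, ¬ Set.EqOn ω (fun _ => c) (ball (0:ℂ) r) := by
    intro c hc
    refine hnc ⟨c, ?_⟩
    have h0m : (0:ℂ) ∈ ball (0:ℂ) 1 := by simp
    refine hωN.eqOn_of_preconnected_of_eventuallyEq analyticOnNhd_const
      (convex_ball (0:ℂ) 1).isPreconnected h0m ?_
    exact Filter.eventuallyEq_of_mem (isOpen_ball.mem_nhds (by simpa using hr)) hc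
  set M := ‖ω z₀‖ with hMdef
  have hM0 : 0 < M := by
    rcases (norm_nonneg (ω z₀)).lt_or_eq with h | h
    · exact h
    · exfalso
      apply hcon 0
      intro z hz
      have hzr : ‖z‖ ≤ r := (mem_ball_zero_iff.mp hz).le
      have := hmax z hzr
      rw [hMdef, ← h] at this
      simpa using norm_eq_zero.mp (le_antisymm this (norm_nonneg _))
  have hωz₀ : ω z₀ ≠ 0 := by
    intro h; rw [hMdef, h] at hM0; simp at hM0
  -- strict maximum principle inside the small ball
  have hlt : ∀ z ∈ ball (0:ℂ) r, ‖ω z‖ < M := by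
    intro z hz
    rcases lt_or_eq_of_le (hmax z (mem_ball_zero_iff.mp hz).le) with h | h
    · exact h
    · exfalso
      have hmax' : IsMaxOn (norm ∘ ω) (ball (0:ℂ) r) z := by
        intro w hw
        show ‖ω w‖ ≤ ‖ω z‖
        rw [h]
        exact hmax w (mem_ball_zero_iff.mp hw).le
      exact hcon (ω z) (Complex.eqOn_of_isPreconnected_of_isMaxOn_norm
        (convex_ball (0:ℂ) r).isPreconnected isOpen_ball (hd1.mono hballs) hz hmax')
  have hmaps : Set.MapsTo ω (ball (0:ℂ) r) (ball (ω 0) M) := by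
    intro z hz
    rw [h0, mem_ball_zero_iff]
    exact hlt z hz
  -- Schwarz-type estimate
  have hsch : ∀ z ∈ ball (0:ℂ) r, ‖ω z‖ ≤ M / r * ‖z‖ := by
    intro z hz
    have := Complex.dist_le_div_mul_dist_of_mapsTo_ball (hd1.mono hballs) (hmaps.mono_right ball_subset_closedBall) hz
    simpa [h0, Complex.dist_eq] using this
  have hωd : HasDerivAt ω (deriv ω z₀) z₀ := (hωN z₀ hz₀1).differentiableAt.hasDerivAt
  set w' := deriv ω z₀ with hw'
  -- tangential derivative
  have hT : HasDerivAt (fun t : ℝ => ω (z₀ * Complex.exp (t * Complex.I)))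
      (w' * (z₀ * Complex.I)) 0 := by
    have hf : HasDerivAt (fun t : ℝ => z₀ * Complex.exp ((t:ℂ) * Complex.I)) (z₀ * Complex.I) 0 := by
      have h1 : HasDerivAt (fun t : ℝ => ((t:ℂ))) 1 0 := Complex.ofRealCLM.hasDerivAt
      simpa using ((h1.mul_const Complex.I).cexp).const_mul z₀
    have h00 : z₀ * Complex.exp ((((0:ℝ)):ℂ) * Complex.I) = z₀ := by simp
    have hg : HasFDerivAt ω (ContinuousLinearMap.restrictScalars ℝ
        (ContinuousLinearMap.smulRight (1:ℂ→L[ℂ]ℂ) w'))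
        (z₀ * Complex.exp ((((0:ℝ)):ℂ) * Complex.I)) := by
      rw [h00]; exact hωd.hasFDerivAt.restrictScalars ℝ
    simpa [mul_comm, Function.comp_def] using hg.comp_hasDerivAt 0 hf
  have hF0 : ω (z₀ * Complex.exp ((((0:ℝ)):ℂ) * Complex.I)) = ω z₀ := by norm_num
  have hGT : HasDerivAt
      (fun t : ℝ => (inner ℝ (ω (z₀ * Complex.exp (t * Complex.I)))
        (ω (z₀ * Complex.exp (t * Complex.I))) : ℝ))
      ((inner ℝ (ω z₀) (w' * (z₀ * Complex.I)) : ℝ) + inner ℝ (w' * (z₀ * Complex.I)) (ω z₀)) 0 := by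
    have := hT.inner ℝ hT
    rwa [hF0] at this
  have hTmax : IsLocalMax
      (fun t : ℝ => (inner ℝ (ω (z₀ * Complex.exp (t * Complex.I)))
        (ω (z₀ * Complex.exp (t * Complex.I))) : ℝ)) 0 := by
    apply Filter.Eventually.of_forall
    intro t
    simp only [real_inner_self_eq_norm_sq]
    have h1 : ‖z₀ * Complex.exp ((t:ℂ) * Complex.I)‖ = r := by
      rw [norm_mul, Complex.norm_exp_ofReal_mul_I, hz₀, mul_one]
    have h2 : ‖ω (z₀ * Complex.exp ((t:ℂ) * Complex.I))‖ ≤ M :=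
      hmax _ (le_of_eq h1)
    have h3 : ‖ω (z₀ * Complex.exp ((((0:ℝ)):ℂ) * Complex.I))‖ = M := by
      rw [hF0]
    calc ‖ω (z₀ * Complex.exp ((t:ℂ) * Complex.I))‖ ^ 2
        = ‖ω (z₀ * Complex.exp ((t:ℂ) * Complex.I))‖ ^ 2 := by
          rfl
      _ ≤ M ^ 2 := pow_le_pow_left₀ (norm_nonneg _) h2 2
      _ = ‖ω (z₀ * Complex.exp ((((0:ℝ)):ℂ) * Complex.I))‖ ^ 2 := by rw [h3]
  have him0 : ((starRingEnd ℂ) (ω z₀) * (w' * z₀)).im = 0 := by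
    apply jack_aux1
    have := hTmax.hasDerivAt_eq_zero hGT
    rw [← this]
    ring_nf
  -- radial derivative
  have hR : HasDerivAt (fun t : ℝ => ω ((t:ℂ) * z₀)) (w' * z₀) 1 := by
    have hf : HasDerivAt (fun t : ℝ => ((t:ℂ)) * z₀) z₀ 1 := by
      simpa using (Complex.ofRealCLM.hasDerivAt (x := (1:ℝ))).mul_const z₀
    have h01 : (((1:ℝ)):ℂ) * z₀ = z₀ := by simp
    have hg : HasFDerivAt ω (ContinuousLinearMap.restrictScalars ℝ
        (ContinuousLinearMap.smulRight (1:ℂ→L[ℂ]ℂ) w')) ((((1:ℝ)):ℂ) * z₀) := by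
      rw [h01]; exact hωd.hasFDerivAt.restrictScalars ℝ
    simpa [mul_comm, Function.comp_def] using hg.comp_hasDerivAt 1 hf
  have hF1 : ω ((((1:ℝ)):ℂ) * z₀) = ω z₀ := by norm_num
  set G : ℝ → ℝ := fun t => (inner ℝ (ω ((t:ℂ) * z₀)) (ω ((t:ℂ) * z₀)) : ℝ) with hGdef
  set d : ℝ := (inner ℝ (ω z₀) (w' * z₀) : ℝ) + inner ℝ (w' * z₀) (ω z₀) with hddef
  have hGR : HasDerivAt G d 1 := by
    have := hR.inner ℝ hR
    rwa [hF1] at this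
  have hG1 : G 1 = M ^ 2 := by
    simp only [hGdef, real_inner_self_eq_norm_sq]
    rw [hF1]
  have hGb : ∀ t : ℝ, t ∈ Set.Ioo (0:ℝ) 1 → G t ≤ t ^ 2 * M ^ 2 := by
    intro t ht
    have habs : ‖(t:ℂ) * z₀‖ = t * r := by
      rw [norm_mul, hz₀, Complex.norm_real, Real.norm_eq_abs, abs_of_pos ht.1]
    have hmem : ((t:ℂ)) * z₀ ∈ ball (0:ℂ) r := by
      rw [mem_ball_zero_iff]
      show ‖(t:ℂ) * z₀‖ < r
      rw [habs]
      nlinarith [ht.1, ht.2, hr]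
    have := hsch _ hmem
    rw [habs] at this
    have hle : ‖ω ((t:ℂ) * z₀)‖ ≤ t * M := by
      calc ‖ω ((t:ℂ) * z₀)‖ ≤ M / r * (t * r) := this
        _ = t * M := by field_simp
    simp only [hGdef, real_inner_self_eq_norm_sq]
    calc ‖ω ((t:ℂ) * z₀)‖ ^ 2 = ‖ω ((t:ℂ) * z₀)‖ ^ 2 := by
          rfl
      _ ≤ (t * M) ^ 2 := pow_le_pow_left₀ (norm_nonneg _) hle 2
      _ = t ^ 2 * M ^ 2 := by ring
  -- slope bound from the left
  have hd2 : 2 * M ^ 2 ≤ d := by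
    have hslope : Filter.Tendsto (slope G 1) (nhdsWithin 1 {(1:ℝ)}ᶜ) (nhds d) :=
      hasDerivAt_iff_tendsto_slope.mp hGR
    have h2 : Filter.Tendsto (slope G 1) (nhdsWithin 1 (Set.Iio 1)) (nhds d) :=
      hslope.mono_left (nhdsWithin_mono 1 (fun x hx => ne_of_lt hx))
    have htend : Filter.Tendsto (fun t : ℝ => (t + 1) * M ^ 2)
        (nhdsWithin 1 (Set.Iio 1)) (nhds (2 * M ^ 2)) := by
      have : Filter.Tendsto (fun t : ℝ => (t + 1) * M ^ 2) (nhds 1) (nhds ((1 + 1) * M ^ 2)) :=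
        ((continuous_id.add continuous_const).mul continuous_const).tendsto 1
      have := this.mono_left (nhdsWithin_le_nhds (s := Set.Iio 1))
      convert this using 2
      ring
    have hlb : ∀ᶠ t in nhdsWithin 1 (Set.Iio 1), (t + 1) * M ^ 2 ≤ slope G 1 t := by
      filter_upwards [Ioo_mem_nhdsLT_of_mem (show (1:ℝ) ∈ Set.Ioc 0 1 by norm_num)] with t ht
      have ht1 : t - 1 < 0 := by linarith [ht.2]
      rw [slope_def_field, div_eq_inv_mul, ← div_eq_inv_mul]
      rw [le_div_iff_of_neg ht1]
      have := hGb t ht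
      rw [hG1]
      nlinarith [this]
    exact le_of_tendsto_of_tendsto htend h2 hlb
  have hre : M ^ 2 ≤ ((starRingEnd ℂ) (ω z₀) * (w' * z₀)).re := by
    have := jack_aux2 (ω z₀) (w' * z₀)
    rw [hddef, this] at hd2
    linarith
  -- assemble
  set u : ℂ := (starRingEnd ℂ) (ω z₀) * (w' * z₀) with hudef
  refine ⟨u.re / M ^ 2, ?_, ?_⟩
  · rw [le_div_iff₀ (by positivity)]
    linarith [hre]
  · have hconj0 : (starRingEnd ℂ) (ω z₀) ≠ 0 := by
      simpa using hωz₀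
    apply mul_left_cancel₀ hconj0
    have hu : u = ((u.re : ℝ) : ℂ) := by
      apply Complex.ext
      · simp
      · simpa using him0
    have hM2 : (starRingEnd ℂ) (ω z₀) * ω z₀ = ((M ^ 2 : ℝ) : ℂ) := by
      rw [mul_comm, Complex.mul_conj]
      norm_cast
      rw [hMdef, ← Complex.sq_norm]
    calc (starRingEnd ℂ) (ω z₀) * (z₀ * w') = u := by rw [hudef]; ring
      _ = ((u.re : ℝ) : ℂ) := hu
      _ = (starRingEnd ℂ) (ω z₀) * ((u.re / M ^ 2 : ℝ) * ω z₀) := by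
          rw [show (starRingEnd ℂ) (ω z₀) * ((u.re / M ^ 2 : ℝ) * ω z₀)
              = ((u.re / M ^ 2 : ℝ) : ℂ) * ((starRingEnd ℂ) (ω z₀) * ω z₀) by ring, hM2]
          push_cast
          rw [div_mul_eq_mul_div, mul_div_assoc, div_self (by exact_mod_cast (by positivity : (M:ℝ)^2 ≠ 0))]
          ring
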